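/- For every x ∈ ℝ, the derivative of Q'/Q equals −Q/3, i.e. (Q'/Q)'(x) = −Q(x)/3. -/

import Mathlib

noncomputable def Q (x : ℝ) : ℝ := (3/2) / (Real.cosh (x/2))^2

lemma cosh_pos' (y : ℝ) : (0:ℝ) < Real.cosh (y/2) := Real.cosh_pos _

lemma hasDerivAt_Q (y : ℝ) :
    HasDerivAt Q (-(3/2) * Real.sinh (y/2) / (Real.cosh (y/2))^3) y := by
  have h1 : HasDerivAt (fun y : ℝ => y/2) (1/2) y := by
    simpa using (hasDerivAt_id y).div_const 2
  have h2 := h1.cosh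
  have h3 := h2.pow 2
  have hne : (Real.cosh (y/2))^2 ≠ 0 := by positivity
  have h4 := ((hasDerivAt_const y ((3:ℝ)/2)).div h3 hne)
  convert h4 using 1 <;> try rfl
  have h := (cosh_pos' y).ne'
  simp only [Pi.pow_apply]
  field_simp
  ring

lemma deriv_Q (y : ℝ) : deriv Q y = -(3/2) * Real.sinh (y/2) / (Real.cosh (y/2))^3 :=
  (hasDerivAt_Q y).deriv

lemma ratio_eq (y : ℝ) : deriv Q y / Q y = -(Real.sinh (y/2) / Real.cosh (y/2)) := by
  rw [deriv_Q, Q]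
  have h := (cosh_pos' y).ne'
  field_simp

theorem deriv_Q'_over_Q (x : ℝ) :
    deriv (fun y => deriv Q y / Q y) x = -Q x / 3 := by
  have hfun : (fun y => deriv Q y / Q y) = fun y => -(Real.sinh (y/2) / Real.cosh (y/2)) := by
    funext y; exact ratio_eq y
  rw [hfun]
  have h1 : HasDerivAt (fun y : ℝ => y/2) (1/2) x := by
    simpa using (hasDerivAt_id x).div_const 2
  have hs := h1.sinh
  have hc := h1.cosh
  have hne : Real.cosh (x/2) ≠ 0 := (cosh_pos' x).ne'
  have hd := ((hs.div hc hne).neg)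
  have hd' : HasDerivAt (fun y => -(Real.sinh (y/2) / Real.cosh (y/2))) _ x := hd
  rw [hd'.deriv, Q]
  have hsq : Real.cosh (x/2)^2 - Real.sinh (x/2)^2 = 1 := Real.cosh_sq_sub_sinh_sq _
  field_simp
  nlinarith [hsq]
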